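/- The maybe monad (option monad) L X = X + 1 on Set, with iteration defined by: for e : X → (Y + X) + 1, e†(x) = some(y) if iterating e from x eventually reaches a value inl(y) ∈ Y, and e†(x) = none if iterating e from x either hits none or continues in X forever, satisfies all axioms of a complete Elgot monad (unfolding, naturality, dinaturality, codiagonal, uniformity). -/

import Mathlib

/-- Iterating `e` from `x` eventually reaches the result `y ∈ Y`. -/
inductive Reaches {X Y : Type} (e : X → Option (Y ⊕ X)) : X → Y → Prop
  | done {x : X} {y : Y} : e x = some (Sum.inl y) → Reaches e x y
  | step {x x' : X} {y : Y} : e x = some (Sum.inr x') → Reaches e x' y → Reaches e x y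

/-- Iteration for the option monad: `optIter e x = some y` if iterating `e` from `x`
eventually reaches a value `inl y`, and `none` otherwise (i.e. if iteration hits
`none` or continues in `X` forever). -/
noncomputable def optIter {X Y : Type} (e : X → Option (Y ⊕ X)) (x : X) : Option Y :=
  @dite _ (∃ y, Reaches e x y) (Classical.propDecidable _)
    (fun h => some h.choose) (fun _ => none)



theorem reaches_unique {X Y : Type} {e : X → Option (Y ⊕ X)} {x : X} {y y' : Y}
    (h : Reaches e x y) : Reaches e x y' → y = y' := by
  induction h with
  | done hx =>
    intro h'
    cases h' with
    | done hx' => rw [hx] at hx'; exact (Sum.inl.inj (Option.some.inj hx'))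
    | step hx' _ => rw [hx] at hx'; simp at hx'
  | step hx _ ih =>
    intro h'
    cases h' with
    | done hx' => rw [hx] at hx'; simp at hx'
    | step hx' hr =>
      rw [hx] at hx'
      cases Sum.inr.inj (Option.some.inj hx')
      exact ih hr

theorem optIter_eq_some {X Y : Type} {e : X → Option (Y ⊕ X)} {x : X} {y : Y} :
    optIter e x = some y ↔ Reaches e x y := by
  unfold optIter
  split
  · rename_i h
    constructor
    · intro hs; cases Option.some.inj hs; exact h.choose_spec
    · intro hr; exact congrArg some (reaches_unique h.choose_spec hr)
  · rename_i h
    constructor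
    · intro hs; cases hs
    · intro hr; exact absurd ⟨y, hr⟩ h

theorem optIter_congr {X X' Y : Type} {e1 : X → Option (Y ⊕ X)} {e2 : X' → Option (Y ⊕ X')}
    {x1 : X} {x2 : X'} (h : ∀ y, Reaches e1 x1 y ↔ Reaches e2 x2 y) :
    optIter e1 x1 = optIter e2 x2 := by
  rcases h1 : optIter e1 x1 with _ | y
  · rcases h2 : optIter e2 x2 with _ | y
    · rfl
    · exact absurd (optIter_eq_some.mpr ((h y).mpr (optIter_eq_some.mp h2))) (by simp [h1])
  · exact (optIter_eq_some.mpr ((h y).mp (optIter_eq_some.mp h1))).symm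

theorem optIter_none {X Y : Type} {e : X → Option (Y ⊕ X)} {x : X}
    (h : ∀ y, ¬ Reaches e x y) : optIter e x = none := by
  rcases h1 : optIter e x with _ | y
  · rfl
  · exact absurd (optIter_eq_some.mp h1) (h y)

theorem reaches_step_iff {X Y : Type} {e : X → Option (Y ⊕ X)} {x x' : X}
    (hx : e x = some (Sum.inr x')) (y : Y) : Reaches e x y ↔ Reaches e x' y := by
  constructor
  · intro h
    cases h with
    | done h' => rw [hx] at h'; simp at h'
    | step h' hr => rw [hx] at h'; cases Sum.inr.inj (Option.some.inj h'); exact hr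
  · exact Reaches.step hx

theorem unfolding {X Y : Type} (e : X → Option (Y ⊕ X)) :
    (fun x => (e x).bind (Sum.elim some (optIter e))) = optIter e := by
  funext x
  show (e x).bind (Sum.elim some (optIter e)) = optIter e x
  rcases hx : e x with _ | (y | x')
  · simp only [Option.bind_none]
    exact (optIter_none (fun y hy => by cases hy with
      | done h => rw [hx] at h; cases h
      | step h _ => rw [hx] at h; cases h)).symm
  · simp only [Option.bind_some, Sum.elim_inl]
    exact (optIter_eq_some.mpr (Reaches.done hx)).symm
  · simp only [Option.bind_some, Sum.elim_inr]
    exact (optIter_congr (fun y => (reaches_step_iff hx y).symm))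

theorem nat_reaches {X Y Z : Type} (f : X → Option (Y ⊕ X)) (g : Y → Option Z) {x : X} {z : Z} :
    Reaches (fun x => (f x).bind
      (Sum.elim (fun y => (g y).bind fun z => some (Sum.inl z))
        (fun x' => some (Sum.inr x')))) x z ↔ ∃ y, Reaches f x y ∧ g y = some z := by
  constructor
  · intro h
    induction h with
    | @done x z hx =>
      rcases hfx : f x with _ | (y | x') <;> rw [hfx] at hx
      · cases hx
      · simp only [Option.bind_some, Sum.elim_inl] at hx
        rcases hgy : g y with _ | z' <;> rw [hgy] at hx
        · cases hx
        · simp only [Option.bind_some, Option.some.injEq, Sum.inl.injEq] at hx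
          exact ⟨y, Reaches.done hfx, hx ▸ hgy⟩
      · simp at hx
    | @step x x' z hx _ ih =>
      rcases hfx : f x with _ | (y | x'') <;> rw [hfx] at hx
      · cases hx
      · simp only [Option.bind_some, Sum.elim_inl] at hx
        rcases hgy : g y with _ | z' <;> rw [hgy] at hx <;> simp at hx
      · simp only [Option.bind_some, Sum.elim_inr, Option.some.injEq, Sum.inr.injEq] at hx
        cases hx
        obtain ⟨y, hr, hg⟩ := ih
        exact ⟨y, Reaches.step hfx hr, hg⟩
  · rintro ⟨y, hr, hg⟩
    induction hr with
    | done hx => exact Reaches.done (by simp [hx, hg])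
    | step hx _ ih => exact Reaches.step (by simp [hx]) (ih hg)

theorem naturality {X Y Z : Type} (f : X → Option (Y ⊕ X)) (g : Y → Option Z) :
    (fun x => (optIter f x).bind g) =
      optIter fun x => (f x).bind
        (Sum.elim (fun y => (g y).bind fun z => some (Sum.inl z))
          (fun x' => some (Sum.inr x'))) := by
  funext x
  show (optIter f x).bind g = _
  rcases h1 : optIter f x with _ | y
  · simp only [Option.bind_none]
    refine (optIter_none fun z hz => ?_).symm
    obtain ⟨y, hr, -⟩ := (nat_reaches f g).mp hz
    rw [optIter_eq_some.mpr hr] at h1; cases h1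
  · simp only [Option.bind_some]
    have hr := optIter_eq_some.mp h1
    rcases hg : g y with _ | z
    · refine (optIter_none fun z hz => ?_).symm
      obtain ⟨y', hr', hg'⟩ := (nat_reaches f g).mp hz
      rw [reaches_unique hr hr'] at hg; rw [hg] at hg'; cases hg'
    · exact (optIter_eq_some.mpr ((nat_reaches f g).mpr ⟨y, hr, hg⟩)).symm

section Dinat
variable {X Y Z : Type} (g : X → Option (Y ⊕ Z)) (h : Z → Option (Y ⊕ X))

theorem din_aux {x : X} {y : Y}
    (hr : Reaches (fun x => (g x).bind (Sum.elim (fun y => some (Sum.inl y)) h)) x y) :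
    g x = some (Sum.inl y) ∨ ∃ z, g x = some (Sum.inr z) ∧
      Reaches (fun z => (h z).bind (Sum.elim (fun y => some (Sum.inl y)) g)) z y := by
  induction hr with
  | @done x y hx =>
    rcases hgx : g x with _ | (y' | z) <;> rw [hgx] at hx <;>
      simp only [Option.bind_none, Option.bind_some, Sum.elim_inl, Sum.elim_inr] at hx
    · cases hx
    · cases Sum.inl.inj (Option.some.inj hx); exact Or.inl rfl
    · exact Or.inr ⟨z, rfl, Reaches.done (by simp [hx])⟩
  | @step x x' y hx _ ih =>
    rcases hgx : g x with _ | (y' | z) <;> rw [hgx] at hx <;>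
      simp only [Option.bind_none, Option.bind_some, Sum.elim_inl, Sum.elim_inr] at hx
    · cases hx
    · cases hx
    · refine Or.inr ⟨z, rfl, ?_⟩
      rcases ih with h1 | ⟨z', h1, hr'⟩
      · exact Reaches.done (by simp [hx, h1])
      · exact Reaches.step (by simp [hx, h1]) hr'

theorem din_fwd {z : Z} {y : Y}
    (hr : Reaches (fun z => (h z).bind (Sum.elim (fun y => some (Sum.inl y)) g)) z y) :
    ∀ x : X, g x = some (Sum.inr z) →
      Reaches (fun x => (g x).bind (Sum.elim (fun y => some (Sum.inl y)) h)) x y := by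
  induction hr with
  | @done z y hz =>
    intro x hgx
    rcases hhz : h z with _ | (y' | x') <;> rw [hhz] at hz <;>
      simp only [Option.bind_none, Option.bind_some, Sum.elim_inl, Sum.elim_inr] at hz
    · cases hz
    · cases Sum.inl.inj (Option.some.inj hz)
      exact Reaches.done (by simp [hgx, hhz])
    · exact Reaches.step (x' := x') (by simp [hgx, hhz]) (Reaches.done (by simp [hz]))
  | @step z z' y hz _ ih =>
    intro x hgx
    rcases hhz : h z with _ | (y' | x') <;> rw [hhz] at hz <;>
      simp only [Option.bind_none, Option.bind_some, Sum.elim_inl, Sum.elim_inr] at hz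
    · cases hz
    · cases hz
    · exact Reaches.step (by simp [hgx, hhz]) (ih x' hz)

theorem dinaturality :
    optIter (fun x => (g x).bind (Sum.elim (fun y => some (Sum.inl y)) h)) =
      fun x => (g x).bind (Sum.elim some
        (optIter fun z => (h z).bind (Sum.elim (fun y => some (Sum.inl y)) g))) := by
  funext x
  rcases hgx : g x with _ | (y | z)
  · refine optIter_none fun y hy => ?_
    rcases din_aux g h hy with h1 | ⟨z, h1, -⟩ <;> rw [hgx] at h1 <;> cases h1
  · exact optIter_eq_some.mpr (Reaches.done (by simp [hgx]))
  · refine optIter_congr fun y => ⟨fun hy => ?_, fun hy => din_fwd g h hy x hgx⟩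
    rcases din_aux g h hy with h1 | ⟨z', h1, hr'⟩ <;> rw [hgx] at h1
    · cases h1
    · cases Sum.inr.inj (Option.some.inj h1); exact hr'
end Dinat

section Codiag
variable {X Y : Type} (g : X → Option ((Y ⊕ X) ⊕ X))

theorem codiag_aux {x : X} {v : Y ⊕ X} (hr : Reaches g x v) :
    ∀ y : Y, Sum.elim (fun y' => y' = y) (fun x' =>
      Reaches (fun x => (g x).bind fun w => some (Sum.elim id Sum.inr w)) x' y) v →
    Reaches (fun x => (g x).bind fun w => some (Sum.elim id Sum.inr w)) x y := by
  induction hr with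
  | @done x v hx =>
    intro y hv
    rcases v with y' | x'
    · simp only [Sum.elim_inl] at hv
      subst hv
      exact Reaches.done (by simp [hx])
    · simp only [Sum.elim_inr] at hv
      exact Reaches.step (by simp [hx]) hv
  | @step x x'' v hx _ ih =>
    intro y hv
    exact Reaches.step (x' := x'') (by simp [hx]) (ih y hv)

theorem codiag_iff {x : X} {y : Y} :
    Reaches (fun x => (g x).bind fun w => some (Sum.elim id Sum.inr w)) x y ↔
      Reaches (optIter g) x y := by
  constructor
  · intro hr
    induction hr with
    | @done x y hx =>
      rcases hgx : g x with _ | w <;> rw [hgx] at hx <;>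
        simp only [Option.bind_none, Option.bind_some, Option.some.injEq] at hx
      · cases hx
      · rcases w with (v | x')
        · simp only [Sum.elim_inl, id_eq] at hx
          subst hx
          exact Reaches.done (optIter_eq_some.mpr (Reaches.done hgx))
        · simp at hx
    | @step x x'' y hx _ ih =>
      rcases hgx : g x with _ | w <;> rw [hgx] at hx <;>
        simp only [Option.bind_none, Option.bind_some, Option.some.injEq] at hx
      · cases hx
      · rcases w with (v | x')
        · simp only [Sum.elim_inl, id_eq] at hx
          subst hx
          exact Reaches.step (optIter_eq_some.mpr (Reaches.done hgx)) ih
        · simp only [Sum.elim_inr, Sum.inr.injEq] at hx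
          subst hx
          have heq : optIter g x = optIter g x' :=
            optIter_congr fun v => reaches_step_iff hgx v
          cases ih with
          | done h' => exact Reaches.done (heq.trans h')
          | step h' hr' => exact Reaches.step (heq.trans h') hr'
  · intro hr
    induction hr with
    | done hx => exact codiag_aux g (optIter_eq_some.mp hx) _ (by simp)
    | step hx _ ih =>
      exact codiag_aux g (optIter_eq_some.mp hx) _ (by simpa using ih)

theorem codiagonal :
    optIter (fun x => (g x).bind fun w => some (Sum.elim id Sum.inr w)) =
      optIter (optIter g) := by
  funext x
  exact optIter_congr fun y => codiag_iff g
end Codiag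

section Unif
variable {A B X : Type} (f : A → Option (X ⊕ A)) (g : B → Option (X ⊕ B)) (h : B → A)

theorem unif_fwd (hc : ∀ b, f (h b) = (g b).bind fun w => some (Sum.map id h w))
    {a : A} {x : X} (hr : Reaches f a x) :
    ∀ b : B, a = h b → Reaches g b x := by
  induction hr with
  | @done a x ha =>
    intro b hb
    subst hb
    rw [hc b] at ha
    rcases hgb : g b with _ | (x' | b') <;> rw [hgb] at ha <;>
      simp only [Option.bind_none, Option.bind_some, Sum.map_inl, Sum.map_inr,
        Option.some.injEq, id_eq] at ha
    · cases ha
    · cases Sum.inl.inj ha; exact Reaches.done hgb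
    · cases ha
  | @step a a' x ha _ ih =>
    intro b hb
    subst hb
    rw [hc b] at ha
    rcases hgb : g b with _ | (x' | b') <;> rw [hgb] at ha <;>
      simp only [Option.bind_none, Option.bind_some, Sum.map_inl, Sum.map_inr,
        Option.some.injEq, id_eq] at ha
    · cases ha
    · cases ha
    · exact Reaches.step hgb (ih b' (Sum.inr.inj ha).symm)

theorem unif_bwd (hc : ∀ b, f (h b) = (g b).bind fun w => some (Sum.map id h w))
    {b : B} {x : X} (hr : Reaches g b x) : Reaches f (h b) x := by
  induction hr with
  | done hb => exact Reaches.done (by rw [hc]; simp [hb])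
  | @step b b' x hb _ ih => exact Reaches.step (x' := h b') (by rw [hc]; simp [hb]) ih

theorem unif (hc : ∀ b, f (h b) = (g b).bind fun w => some (Sum.map id h w)) : ∀ b, optIter f (h b) = optIter g b := fun b =>
  optIter_congr fun x =>
    ⟨fun hr => unif_fwd f g h hc hr b rfl, fun hr => unif_bwd f g h hc hr⟩
end Unif

/-- The option monad on `Set`, with the above iteration, satisfies all the axioms of a
complete Elgot monad: unfolding, naturality, dinaturality, codiagonal, uniformity. -/
theorem option_isElgot :
    -- unfolding
    (∀ {X Y : Type} (e : X → Option (Y ⊕ X)),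
      (fun x => (e x).bind (Sum.elim some (optIter e))) = optIter e) ∧
    -- naturality
    (∀ {X Y Z : Type} (f : X → Option (Y ⊕ X)) (g : Y → Option Z),
      (fun x => (optIter f x).bind g) =
        optIter fun x => (f x).bind
          (Sum.elim (fun y => (g y).bind fun z => some (Sum.inl z))
            (fun x' => some (Sum.inr x')))) ∧
    -- dinaturality
    (∀ {X Y Z : Type} (g : X → Option (Y ⊕ Z)) (h : Z → Option (Y ⊕ X)),
      optIter (fun x => (g x).bind (Sum.elim (fun y => some (Sum.inl y)) h)) =
        fun x => (g x).bind (Sum.elim some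
          (optIter fun z => (h z).bind (Sum.elim (fun y => some (Sum.inl y)) g)))) ∧
    -- codiagonal
    (∀ {X Y : Type} (g : X → Option ((Y ⊕ X) ⊕ X)),
      optIter (fun x => (g x).bind fun w => some (Sum.elim id Sum.inr w)) =
        optIter (optIter g)) ∧
    -- uniformity
    (∀ {A B X : Type} (f : A → Option (X ⊕ A)) (g : B → Option (X ⊕ B)) (h : B → A),
      (∀ b, f (h b) = (g b).bind fun w => some (Sum.map id h w)) →
      ∀ b, optIter f (h b) = optIter g b) :=
  ⟨@unfolding, @naturality, @dinaturality, @codiagonal, @unif⟩
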